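/- arXiv:2107.01838 — 3 statements merged into one kernel-verified Lean document; each statement's English description precedes it below -/
import Mathlib

section
/- Let K/F be a quadratic extension of number fields. Let r_{K/F,ℝ} denote the number of real places of F all of whose extensions to K are real, and let s_F denote the number of complex places of F. Then the quotient group 𝒪_K^× / ι(𝒪_F^×) (the unit group of the ring of integers of K modulo the image of the unit group of the ring of integers of F) is a finitely generated abelian group whose free rank equals r_{K/F,ℝ} + s_F. -/
open NumberField TensorProduct

set_option maxSynthPendingDepth 2

section Auxiliary

open Module Polynomial NumberField.InfinitePlace

instance : Module.Flat ℤ ℚ := IsLocalization.flat ℚ (nonZeroDivisors ℤ)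

/-- The rationalization of a finite abelian group is trivial. -/
lemma rat_tensor_subsingleton (M : Type) [AddCommGroup M] [Finite M] :
    Subsingleton (ℚ ⊗[ℤ] M) := by
  suffices h : ∀ x : ℚ ⊗[ℤ] M, x = 0 by exact ⟨fun a b => by rw [h a, h b]⟩
  intro x
  induction x using TensorProduct.induction_on with
  | zero => rfl
  | tmul q m =>
      have hpos : 0 < Nat.card M := Nat.card_pos
      have hm : (Nat.card M : ℤ) • m = 0 := by
        obtain ⟨c, hc⟩ := addOrderOf_dvd_natCard m
        rw [natCast_zsmul, hc, mul_comm, mul_smul, addOrderOf_nsmul_eq_zero, smul_zero]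
      calc q ⊗ₜ[ℤ] m = ((Nat.card M : ℤ) • (q / (Nat.card M : ℚ))) ⊗ₜ[ℤ] m := by
            congr 1
            rw [zsmul_eq_mul]
            push_cast
            field_simp
        _ = (q / (Nat.card M : ℚ)) ⊗ₜ[ℤ] ((Nat.card M : ℤ) • m) := by
            rw [TensorProduct.smul_tmul]
        _ = 0 := by rw [hm, TensorProduct.tmul_zero]
  | add x y hx hy => rw [hx, hy, add_zero]

/-- Rank-nullity for a rationalized right-exact sequence of abelian groups. -/
lemma finrank_exact {M N P : Type} [AddCommGroup M] [AddCommGroup N] [AddCommGroup P]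
    [Module.Finite ℤ N] (f : M →ₗ[ℤ] N) (g : N →ₗ[ℤ] P)
    (hfg : Function.Exact f g) (hg : Function.Surjective g) :
    Module.finrank ℚ (ℚ ⊗[ℤ] P) + Module.finrank ℚ (LinearMap.range (f.baseChange ℚ)) =
      Module.finrank ℚ (ℚ ⊗[ℤ] N) := by
  haveI : Module.Finite ℚ (ℚ ⊗[ℤ] N) := inferInstance
  have hexact : Function.Exact (f.baseChange ℚ) (g.baseChange ℚ) := by
    have := Module.Flat.lTensor_exact (R := ℤ) ℚ hfg
    rwa [Function.Exact, ← f.baseChange_eq_ltensor, ← g.baseChange_eq_ltensor] at this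
  have hgs : Function.Surjective (g.baseChange ℚ) := by
    have := LinearMap.lTensor_surjective (R := ℤ) ℚ hg
    rwa [← g.baseChange_eq_ltensor] at this
  have hker : LinearMap.ker (g.baseChange ℚ) = LinearMap.range (f.baseChange ℚ) :=
    LinearMap.exact_iff.mp hexact
  have h := LinearMap.finrank_range_add_finrank_ker (g.baseChange ℚ)
  rw [LinearMap.range_eq_top.mpr hgs, finrank_top, hker] at h
  exact h

lemma range_baseChange_of_subsingleton {M N : Type} [AddCommGroup M] [AddCommGroup N]
    [Subsingleton (ℚ ⊗[ℤ] M)] (f : M →ₗ[ℤ] N) :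
    LinearMap.range (f.baseChange ℚ) = ⊥ := by
  rw [LinearMap.range_eq_bot]
  apply LinearMap.ext
  intro x
  rw [Subsingleton.elim x 0, map_zero, LinearMap.zero_apply]

/-- The rationalized unit group of a number field has dimension the unit rank. -/
lemma finrank_rat_tensor_units (L : Type) [Field L] [NumberField L] :
    Module.finrank ℚ (ℚ ⊗[ℤ] Additive (𝓞 L)ˣ) = Units.rank L := by
  classical
  set T := Units.torsion L with hT
  let f : Additive ↥T →+ Additive (𝓞 L)ˣ := MonoidHom.toAdditive T.subtype
  let g : Additive (𝓞 L)ˣ →+ Additive ((𝓞 L)ˣ ⧸ T) :=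
    MonoidHom.toAdditive (QuotientGroup.mk' T)
  haveI : Module.Finite ℤ (Additive (𝓞 L)ˣ) :=
    Module.Finite.iff_addGroup_fg.mpr (AddGroup.fg_iff_addMonoid_fg.mpr inferInstance)
  have hexact : Function.Exact f.toIntLinearMap g.toIntLinearMap := by
    intro y
    constructor
    · intro hy
      have : (QuotientGroup.mk' T) y.toMul = 1 := hy
      rw [QuotientGroup.mk'_apply, QuotientGroup.eq_one_iff] at this
      exact ⟨Additive.ofMul (⟨y.toMul, this⟩ : T), rfl⟩
    · rintro ⟨t, rfl⟩
      show (((t.toMul : ↥T) : (𝓞 L)ˣ) : (𝓞 L)ˣ ⧸ T) = 1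
      exact (QuotientGroup.eq_one_iff _).mpr (t.toMul).2
  have hg : Function.Surjective g.toIntLinearMap := by
    intro q
    obtain ⟨x, hx⟩ := QuotientGroup.mk'_surjective T q.toMul
    exact ⟨Additive.ofMul x, congrArg Additive.ofMul hx⟩
  have key := finrank_exact f.toIntLinearMap g.toIntLinearMap hexact hg
  haveI : Subsingleton (ℚ ⊗[ℤ] Additive ↥T) := rat_tensor_subsingleton _
  rw [range_baseChange_of_subsingleton, finrank_bot] at key
  haveI : Module.Free ℤ (Additive ((𝓞 L)ˣ ⧸ T)) :=
    Module.Free.of_basis (Units.basisModTorsion L)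
  rw [Module.finrank_baseChange, Units.rank_modTorsion] at key
  omega

open Polynomial in
/-- A degree-two extension of fields is normal. -/
lemma normal_of_finrank_two (F K : Type) [Field F] [Field K] [Algebra F K]
    (h : Module.finrank F K = 2) : Normal F K := by
  haveI : FiniteDimensional F K := Module.finite_of_finrank_pos (by omega)
  rw [normal_iff]
  intro x
  have hint : IsIntegral F x := Algebra.IsIntegral.isIntegral x
  refine ⟨hint, ?_⟩
  have hnd : (minpoly F x).natDegree ∣ 2 := h ▸ minpoly.degree_dvd hint
  have hne : (minpoly F x).natDegree ≠ 0 := by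
    have := minpoly.natDegree_pos hint; omega
  have hroot : ((minpoly F x).map (algebraMap F K)).IsRoot x := by
    rw [IsRoot, eval_map, ← aeval_def, minpoly.aeval]
  have hndm : ((minpoly F x).map (algebraMap F K)).natDegree = (minpoly F x).natDegree :=
    natDegree_map _
  have hcases : (minpoly F x).natDegree = 1 ∨ (minpoly F x).natDegree = 2 := by
    rcases (Nat.le_of_dvd (by norm_num) hnd).lt_or_eq with h1 | h2
    · left; omega
    · right; exact h2
  rcases hcases with hd | hd
  · exact Splits.of_natDegree_le_one (by omega)
  · -- degree 2 with a root
    set p := (minpoly F x).map (algebraMap F K) with hp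
    have hfac : (X - C x) * (p /ₘ (X - C x)) = p :=
      (mul_divByMonic_eq_iff_isRoot).mpr hroot
    rw [← hfac]
    refine Splits.mul (Splits.X_sub_C _) (Splits.of_natDegree_le_one ?_)
    have h2 : p.natDegree = 2 := by rw [hp, hndm, hd]
    have := natDegree_divByMonic p (monic_X_sub_C x)
    simp only [natDegree_X_sub_C] at this
    omega

open NumberField.InfinitePlace in
/-- Counting infinite places in a quadratic extension of number fields. -/
lemma card_places (F K : Type) [Field F] [NumberField F] [Field K] [NumberField K]
    [Algebra F K] (hquad : Module.finrank F K = 2) :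
    Fintype.card (InfinitePlace K) =
      Fintype.card (InfinitePlace F) +
      Nat.card {v : InfinitePlace F // v.IsReal ∧
          ∀ w : InfinitePlace K, w.comap (algebraMap F K) = v → w.IsReal} +
        Nat.card {v : InfinitePlace F // v.IsComplex} := by
  classical
  haveI : FiniteDimensional F K := Module.finite_of_finrank_pos (by omega)
  haveI : Normal F K := normal_of_finrank_two F K hquad
  haveI : IsGalois F K := ⟨⟩
  have hcard := card_eq_card_isUnramifiedIn (k := F) (K := K)
  rw [hquad] at hcard
  set P : InfinitePlace F → Prop := fun v => v.IsReal ∧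
    ∀ w : InfinitePlace K, w.comap (algebraMap F K) = v → w.IsReal with hP
  have hiff : ∀ v : InfinitePlace F, v.IsUnramifiedIn K ↔ (P v ∨ v.IsComplex) := by
    intro v
    constructor
    · intro h
      by_cases hv : v.IsComplex
      · exact Or.inr hv
      · refine Or.inl ⟨not_isComplex_iff_isReal.mp hv, fun w hw => ?_⟩
        have := h w hw
        rw [isUnramified_iff, hw] at this
        exact this.resolve_right hv
    · rintro (⟨hre, hall⟩ | hv) w hw
      · exact isUnramified_iff.mpr (Or.inl (hall w hw))
      · exact isUnramified_iff.mpr (Or.inr (hw ▸ hv))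
  have hsplit : (Finset.univ.filter (fun v : InfinitePlace F => v.IsUnramifiedIn K)).card =
      (Finset.univ.filter P).card +
      (Finset.univ.filter (fun v : InfinitePlace F => v.IsComplex)).card := by
    rw [← Finset.card_union_of_disjoint]
    · congr 1
      ext v
      simp [hiff v]
    · rw [Finset.disjoint_filter]
      intro v _ hPv
      rw [← not_isReal_iff_isComplex]
      exact fun h => h hPv.1
  have hcompl : (Finset.univ.filter (fun v : InfinitePlace F => v.IsUnramifiedIn K)).card +
      ((Finset.univ.filter (fun v : InfinitePlace F => v.IsUnramifiedIn K))ᶜ).card =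
      Fintype.card (InfinitePlace F) := Finset.card_add_card_compl _
  have e1 : Nat.card {v : InfinitePlace F // P v} = (Finset.univ.filter P).card := by
    rw [Nat.card_eq_fintype_card, Fintype.card_subtype]
  have e2 : Nat.card {v : InfinitePlace F // v.IsComplex} =
      (Finset.univ.filter (fun v : InfinitePlace F => v.IsComplex)).card := by
    rw [Nat.card_eq_fintype_card, Fintype.card_subtype]
  have hc2 : Fintype.card (InfinitePlace K) =
      (Finset.univ.filter (fun v : InfinitePlace F => v.IsUnramifiedIn K)).card * 2 +
      ((Finset.univ.filter (fun v : InfinitePlace F => v.IsUnramifiedIn K))ᶜ).card * 1 := by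
    convert hcard using 3
  have e1' : Nat.card {v : InfinitePlace F // v.IsReal ∧
      ∀ w : InfinitePlace K, w.comap (algebraMap F K) = v → w.IsReal} =
      (Finset.univ.filter P).card := e1
  rw [e1', e2]
  omega

end Auxiliary

/-- For a quadratic extension `K/F` of number fields, the quotient
`𝒪_K^× / ι(𝒪_F^×)` is a finitely generated abelian group whose free rank
(the dimension of its rationalization) is `r_{K/F,ℝ} + s_F`, where `r_{K/F,ℝ}` is the
number of real places of `F` all of whose extensions to `K` are real and `s_F` is the
number of complex places of `F`. -/
theorem relative_unit_group_rank (F K : Type) [Field F] [NumberField F] [Field K]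
    [NumberField K] [Algebra F K] (hquad : Module.finrank F K = 2) :
    Group.FG ((𝓞 K)ˣ ⧸ (Units.map (algebraMap (𝓞 F) (𝓞 K)).toMonoidHom).range) ∧
    Module.finrank ℚ
        (ℚ ⊗[ℤ]
          Additive ((𝓞 K)ˣ ⧸ (Units.map (algebraMap (𝓞 F) (𝓞 K)).toMonoidHom).range)) =
      Nat.card {v : InfinitePlace F // v.IsReal ∧
          ∀ w : InfinitePlace K, w.comap (algebraMap F K) = v → w.IsReal} +
        Nat.card {v : InfinitePlace F // v.IsComplex} := by
  classical
  constructor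
  · exact Group.fg_iff_monoid_fg.mpr
      (Monoid.fg_of_surjective (QuotientGroup.mk' _) (QuotientGroup.mk'_surjective _))
  · set H := (Units.map (algebraMap (𝓞 F) (𝓞 K)).toMonoidHom).range with hH
    let f : Additive (𝓞 F)ˣ →+ Additive (𝓞 K)ˣ :=
      MonoidHom.toAdditive (Units.map (algebraMap (𝓞 F) (𝓞 K)).toMonoidHom)
    let g : Additive (𝓞 K)ˣ →+ Additive ((𝓞 K)ˣ ⧸ H) :=
      MonoidHom.toAdditive (QuotientGroup.mk' H)
    haveI : Module.Finite ℤ (Additive (𝓞 K)ˣ) :=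
      Module.Finite.iff_addGroup_fg.mpr (AddGroup.fg_iff_addMonoid_fg.mpr inferInstance)
    haveI : Module.Finite ℤ (Additive (𝓞 F)ˣ) :=
      Module.Finite.iff_addGroup_fg.mpr (AddGroup.fg_iff_addMonoid_fg.mpr inferInstance)
    have hexact : Function.Exact f.toIntLinearMap g.toIntLinearMap := by
      intro y
      constructor
      · intro hy
        have : (QuotientGroup.mk' H) y.toMul = 1 := hy
        rw [QuotientGroup.mk'_apply, QuotientGroup.eq_one_iff] at this
        obtain ⟨x, hx⟩ := this
        exact ⟨Additive.ofMul x, congrArg Additive.ofMul hx⟩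
      · rintro ⟨t, rfl⟩
        show ((Units.map (algebraMap (𝓞 F) (𝓞 K)).toMonoidHom t.toMul : (𝓞 K)ˣ) :
          (𝓞 K)ˣ ⧸ H) = 1
        exact (QuotientGroup.eq_one_iff _).mpr ⟨t.toMul, rfl⟩
    have hg : Function.Surjective g.toIntLinearMap := by
      intro q
      obtain ⟨x, hx⟩ := QuotientGroup.mk'_surjective H q.toMul
      exact ⟨Additive.ofMul x, congrArg Additive.ofMul hx⟩
    have key := finrank_exact f.toIntLinearMap g.toIntLinearMap hexact hg
    have hinj : Function.Injective f.toIntLinearMap := by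
      have h1 : Function.Injective (algebraMap (𝓞 F) (𝓞 K)) := by
        have hKinj : Function.Injective (algebraMap (𝓞 F) K) := by
          rw [IsScalarTower.algebraMap_eq (𝓞 F) F K, RingHom.coe_comp]
          exact (algebraMap F K).injective.comp (IsFractionRing.injective (𝓞 F) F)
        rw [IsScalarTower.algebraMap_eq (𝓞 F) (𝓞 K) K, RingHom.coe_comp] at hKinj
        exact Function.Injective.of_comp hKinj
      exact fun a b hab => Units.map_injective h1 hab
    have hfr : Module.finrank ℚ (LinearMap.range (f.toIntLinearMap.baseChange ℚ)) =
        Module.finrank ℚ (ℚ ⊗[ℤ] Additive (𝓞 F)ˣ) := by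
      have hbinj : Function.Injective (f.toIntLinearMap.baseChange ℚ) := by
        have := Module.Flat.lTensor_preserves_injective_linearMap (M := ℚ)
          f.toIntLinearMap hinj
        rwa [← LinearMap.baseChange_eq_ltensor] at this
      exact LinearMap.finrank_range_of_inj hbinj
    rw [hfr, finrank_rat_tensor_units, finrank_rat_tensor_units] at key
    have hcount := card_places F K hquad
    have h1 : 0 < Fintype.card (InfinitePlace F) := Fintype.card_pos
    have h2 : Units.rank K = Fintype.card (InfinitePlace K) - 1 := rfl
    have h3 : Units.rank F = Fintype.card (InfinitePlace F) - 1 := rfl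
    omega
end

section
/- Let u be a natural number, C a compact Hausdorff abelian topological group, and Γ a discrete subgroup of the topological group ℝ^u × C (with the product topology). Let π : ℝ^u × C → ℝ^u be the projection. Then: (a) Γ ∩ ker π is a finite group; (b) π(Γ) is a discrete subgroup of ℝ^u; (c) Γ is isomorphic as a group to (Γ ∩ ker π) × π(Γ). -/
/-- Let `C` be a compact Hausdorff abelian topological group and `Γ` a
discrete subgroup of `ℝ^u × C`.  With `π` the projection onto `ℝ^u`:
(a) `Γ ∩ ker π` is finite, (b) `π(Γ)` is a discrete subgroup of `ℝ^u`, and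
(c) `Γ ≃ (Γ ∩ ker π) × π(Γ)` as groups. -/
theorem discrete_subgroup_of_euclidean_times_compact (u : ℕ) (C : Type)
    [AddCommGroup C] [TopologicalSpace C] [IsTopologicalAddGroup C] [CompactSpace C]
    [T2Space C] (Γ : AddSubgroup ((Fin u → ℝ) × C)) [DiscreteTopology ↥Γ] :
    Finite ↥(Γ ⊓ (AddMonoidHom.fst (Fin u → ℝ) C).ker) ∧
    DiscreteTopology ↥(Γ.map (AddMonoidHom.fst (Fin u → ℝ) C)) ∧
    Nonempty (↥Γ ≃+
      ↥(Γ ⊓ (AddMonoidHom.fst (Fin u → ℝ) C).ker) ×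
        ↥(Γ.map (AddMonoidHom.fst (Fin u → ℝ) C))) := by
  -- `Γ` is closed, so its intersection with any compact set is finite.
  letI : UniformSpace C := IsTopologicalAddGroup.rightUniformSpace C
  haveI : IsUniformAddGroup C := isUniformAddGroup_of_addCommGroup
  have hclosed : IsClosed (Γ : Set ((Fin u → ℝ) × C)) := AddSubgroup.isClosed_of_discrete
  have key : ∀ r : ℝ, ((Γ : Set ((Fin u → ℝ) × C)) ∩
      (Metric.closedBall (0 : Fin u → ℝ) r ×ˢ Set.univ)).Finite := by
    intro r
    have hK : IsCompact (Metric.closedBall (0 : Fin u → ℝ) r ×ˢ (Set.univ : Set C)) :=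
      (isCompact_closedBall _ _).prod isCompact_univ
    have hc : IsCompact ((Γ : Set ((Fin u → ℝ) × C)) ∩
        (Metric.closedBall (0 : Fin u → ℝ) r ×ˢ Set.univ)) := hK.inter_left hclosed
    refine hc.finite ?_
    exact isDiscrete_iff_discreteTopology.mpr <| DiscreteTopology.of_subset (inferInstance : DiscreteTopology (Γ : Set ((Fin u → ℝ) × C)))
      Set.inter_subset_left
  -- (a) Finiteness of `Γ ⊓ ker π`.
  have ha : Finite ↥(Γ ⊓ (AddMonoidHom.fst (Fin u → ℝ) C).ker) := by
    have ha' : ((Γ ⊓ (AddMonoidHom.fst (Fin u → ℝ) C).ker : AddSubgroup _) :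
        Set ((Fin u → ℝ) × C)).Finite := by
      refine (key 0).subset ?_
      rintro x hx
      simp only [AddSubgroup.coe_inf, Set.mem_inter_iff, SetLike.mem_coe,
        AddMonoidHom.mem_ker, AddMonoidHom.coe_fst] at hx
      exact ⟨hx.1, by simp [hx.2], trivial⟩
    exact ha'.to_subtype
  -- (b) Discreteness of the projection.
  have hb : DiscreteTopology ↥(Γ.map (AddMonoidHom.fst (Fin u → ℝ) C)) := by
    have hfin : ((Γ.map (AddMonoidHom.fst (Fin u → ℝ) C) : Set (Fin u → ℝ)) ∩
        Metric.closedBall 0 1).Finite := by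
      have hsub : ((Γ.map (AddMonoidHom.fst (Fin u → ℝ) C) : Set (Fin u → ℝ)) ∩
          Metric.closedBall 0 1) ⊆
          (AddMonoidHom.fst (Fin u → ℝ) C) ''
            ((Γ : Set ((Fin u → ℝ) × C)) ∩ (Metric.closedBall (0 : Fin u → ℝ) 1 ×ˢ Set.univ)) := by
        rintro x ⟨hx, hbx⟩
        obtain ⟨y, hy, rfl⟩ := hx
        exact ⟨y, ⟨hy, hbx, trivial⟩, rfl⟩
      exact ((key 1).image _).subset hsub
    set P := Γ.map (AddMonoidHom.fst (Fin u → ℝ) C) with hPd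
    set F : Set (Fin u → ℝ) := ((P : Set (Fin u → ℝ)) ∩ Metric.closedBall 0 1) \ {0} with hF
    have hFfin : F.Finite := hfin.subset Set.diff_subset
    have hFclosed : IsClosed F := hFfin.isClosed
    have hU : IsOpen (Metric.ball (0 : Fin u → ℝ) 1 \ F) := Metric.isOpen_ball.sdiff hFclosed
    have h0 : IsOpen ({0} : Set ↥P) := by
      have hset : ({0} : Set ↥P) = (Subtype.val) ⁻¹' (Metric.ball (0 : Fin u → ℝ) 1 \ F) := by
        ext x
        simp only [Set.mem_singleton_iff, Set.mem_preimage, Set.mem_diff]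
        constructor
        · rintro rfl
          refine ⟨by simp, ?_⟩
          simp [hF]
        · rintro ⟨hbx, hnF⟩
          have hx : (x : Fin u → ℝ) ∈ F ∪ {0} := by
            by_cases hx0 : (x : Fin u → ℝ) = 0
            · exact Or.inr hx0
            · exact Or.inl ⟨⟨x.2, Metric.ball_subset_closedBall hbx⟩, hx0⟩
          rcases hx with h | h
          · exact absurd h hnF
          · exact Subtype.ext h
      rw [hset]
      exact hU.preimage continuous_subtype_val
    exact discreteTopology_of_isOpen_singleton_zero h0
  refine ⟨ha, hb, ?_⟩
  -- (c) The splitting.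
  set π := AddMonoidHom.fst (Fin u → ℝ) C with hπ
  set P := Γ.map π with hP
  set K := Γ ⊓ π.ker with hK
  haveI : DiscreteTopology ↥P := hb
  haveI : DiscreteTopology ↥(AddSubgroup.toIntSubmodule P) := hb
  haveI hfree : Module.Free ℤ ↥(AddSubgroup.toIntSubmodule P) := inferInstance
  let eqv : ↥(AddSubgroup.toIntSubmodule P) ≃+ ↥P :=
    { toFun := fun x => ⟨x.1, x.2⟩
      invFun := fun x => ⟨x.1, x.2⟩
      left_inv := fun _ => rfl
      right_inv := fun _ => rfl
      map_add' := fun _ _ => rfl }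
  haveI : Module.Free ℤ ↥P := Module.Free.of_equiv eqv.toIntLinearEquiv
  haveI : Module.Projective ℤ ↥P := inferInstance
  let g : ↥Γ →+ ↥P := π.addSubgroupMap Γ
  have gsurj : Function.Surjective g := π.addSubgroupMap_surjective Γ
  obtain ⟨s, hs⟩ := Module.projective_lifting_property (g.toIntLinearMap)
    (LinearMap.id : ↥P →ₗ[ℤ] ↥P) gsurj
  have hgs : ∀ p : ↥P, g (s p) = p := fun p => DFunLike.congr_fun hs p
  have hcoe : ∀ x : ↥Γ, ((g x : ↥P) : Fin u → ℝ) = (x : (Fin u → ℝ) × C).1 := fun _ => rfl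
  have hmem : ∀ x : ↥Γ,
      ((x : (Fin u → ℝ) × C) - ((s (g x) : ↥Γ) : (Fin u → ℝ) × C)) ∈ K := by
    intro x
    refine AddSubgroup.mem_inf.mpr ⟨sub_mem x.2 (s (g x)).2, AddMonoidHom.mem_ker.mpr ?_⟩
    have h2 : ((s (g x) : ↥Γ) : (Fin u → ℝ) × C).1 = (x : (Fin u → ℝ) × C).1 := by
      rw [← hcoe (s (g x)), hgs, hcoe]
    simp only [map_sub, hπ, AddMonoidHom.coe_fst, h2, sub_self]
  have hg0 : ∀ k : ↥K, g (AddSubgroup.inclusion inf_le_left k) = 0 := by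
    intro k
    apply Subtype.ext
    have hker := (AddSubgroup.mem_inf.mp k.2).2
    rw [AddMonoidHom.mem_ker] at hker
    simpa [hcoe, hπ] using hker
  let toFun : ↥Γ → ↥K × ↥P := fun x =>
    (⟨(x : (Fin u → ℝ) × C) - ((s (g x) : ↥Γ) : (Fin u → ℝ) × C), hmem x⟩, g x)
  let invFun : ↥K × ↥P → ↥Γ := fun y => AddSubgroup.inclusion inf_le_left y.1 + s y.2
  have hli : Function.LeftInverse invFun toFun := by
    intro x
    apply Subtype.ext
    simp [toFun, invFun, AddSubgroup.inclusion, sub_add_cancel]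
  have hri : Function.RightInverse invFun toFun := by
    rintro ⟨k, p⟩
    have hgp : g (AddSubgroup.inclusion inf_le_left k + s p) = p := by
      rw [map_add, hg0, zero_add, hgs]
    refine Prod.ext ?_ ?_
    · apply Subtype.ext
      simp only [toFun, invFun, hgp, AddSubgroup.coe_add]
      simp [AddSubgroup.inclusion]
    · exact hgp
  have hadd : ∀ x y : ↥Γ, toFun (x + y) = toFun x + toFun y := by
    intro x y
    have hgxy : g (x + y) = g x + g y := map_add g x y
    refine Prod.ext ?_ ?_
    · apply Subtype.ext
      simp only [toFun, hgxy, map_add, Prod.fst_add, AddSubgroup.coe_add]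
      abel
    · exact hgxy
  exact ⟨{ toFun := toFun, invFun := invFun, left_inv := hli, right_inv := hri,
           map_add' := hadd }⟩
end

section
/- Let Γ be a group acting on a set Z, H ≤ Γ a subgroup, and D ⊆ Z a subset with h·D = D for all h ∈ H. Assume that for every z ∈ Z there exists a left coset γH ∈ Γ/H, unique as a coset, such that γ^{-1}·z ∈ D. Let R be a commutative ring. Define the induced module Ind_H^Γ Map(D,R) as the set of functions Φ : Γ → Map(D,R) such that Φ(γh)(d) = Φ(γ)(h·d) for all γ ∈ Γ, h ∈ H, d ∈ D, and such that Φ is supported on finitely many left cosets of H; Γ acts by (γ′·Φ)(γ) = Φ(γ′^{-1}γ). Let M be the set of functions f : Z → R that vanish identically on all but finitely many of the sets γ·D (γH ∈ Γ/H), with Γ acting by (γ·f)(z) = f(γ^{-1}·z). Then the map sending Φ to the function z ↦ Φ(γ_z)(γ_z^{-1}·z), where γ_z H is the unique coset with γ_z^{-1}·z ∈ D, is well defined (independent of the choice of representative γ_z) and is a Γ-equivariant isomorphism of R-modules Ind_H^Γ Map(D,R) ≅ M. -/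
open Pointwise

/-- Membership in the induced module `Ind_H^Γ Map(D, R)`: functions `Φ : Γ → (D → R)`
satisfying the compatibility `Φ(γh)(d) = Φ(γ)(h·d)` for `h ∈ H` and supported on finitely
many left cosets of `H`. -/
def IndCond (Γ Z R : Type) [Group Γ] [MulAction Γ Z] (H : Subgroup Γ) (D : Set Z)
    [CommRing R] (Φ : Γ → D → R) : Prop :=
  (∀ (γ : Γ), ∀ h ∈ H, ∀ (d : D) (hd : h • (d : Z) ∈ D),
      Φ (γ * h) d = Φ γ ⟨h • (d : Z), hd⟩) ∧
  Set.Finite ((QuotientGroup.mk (s := H)) '' {γ : Γ | Φ γ ≠ 0})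

/-- The induced module `Ind_H^Γ Map(D, R)` as a submodule of `Γ → (D → R)`. -/
def indModule (Γ Z R : Type) [Group Γ] [MulAction Γ Z] (H : Subgroup Γ) (D : Set Z)
    [CommRing R] : Submodule R (Γ → D → R) where
  carrier := {Φ | IndCond Γ Z R H D Φ}
  zero_mem' := by
    refine ⟨fun γ h hh d hd => rfl, ?_⟩
    have h0 : {γ : Γ | (0 : Γ → D → R) γ ≠ 0} = ∅ := by simp
    rw [h0, Set.image_empty]
    exact Set.finite_empty
  add_mem' := by
    rintro Φ Ψ ⟨hΦ1, hΦ2⟩ ⟨hΨ1, hΨ2⟩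
    refine ⟨fun γ h hh d hd => by simp [hΦ1 γ h hh d hd, hΨ1 γ h hh d hd], ?_⟩
    refine Set.Finite.subset (hΦ2.union hΨ2) ?_
    rw [← Set.image_union]
    refine Set.image_mono ?_
    intro γ hγ
    have : Φ γ ≠ 0 ∨ Ψ γ ≠ 0 := by
      by_contra hc
      push_neg at hc
      exact hγ (by simp [Pi.add_apply, hc.1, hc.2])
    simpa [Set.mem_union, Set.mem_setOf_eq] using this
  smul_mem' := by
    rintro r Φ ⟨hΦ1, hΦ2⟩
    refine ⟨fun γ h hh d hd => by simp [hΦ1 γ h hh d hd], ?_⟩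
    refine Set.Finite.subset hΦ2 (Set.image_mono ?_)
    intro γ hγ
    have : Φ γ ≠ 0 := by
      intro h0
      exact hγ (by simp [h0])
    simpa [Set.mem_setOf_eq] using this

/-- Membership in the module `M` of functions `f : Z → R` vanishing identically on all but
finitely many of the translates `γ·D` (`γH ∈ Γ/H`). -/
def MCond (Γ Z R : Type) [Group Γ] [MulAction Γ Z] (H : Subgroup Γ) (D : Set Z)
    [CommRing R] (f : Z → R) : Prop :=
  Set.Finite ((QuotientGroup.mk (s := H)) '' {γ : Γ | ∃ z ∈ γ • D, f z ≠ 0})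

/-- The module `M` of functions `Z → R` vanishing on all but finitely many translates of
`D` as a submodule of `Z → R`. -/
def transModule (Γ Z R : Type) [Group Γ] [MulAction Γ Z] (H : Subgroup Γ) (D : Set Z)
    [CommRing R] : Submodule R (Z → R) where
  carrier := {f | MCond Γ Z R H D f}
  zero_mem' := by
    show Set.Finite _
    have h0 : {γ : Γ | ∃ z ∈ γ • D, (0 : Z → R) z ≠ 0} = ∅ := by simp
    rw [h0, Set.image_empty]
    exact Set.finite_empty
  add_mem' := by
    intro f g hf hg
    refine Set.Finite.subset (Set.Finite.union hf hg) ?_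
    rw [← Set.image_union]
    refine Set.image_mono ?_
    rintro γ ⟨z, hz, hne⟩
    have : (∃ z ∈ γ • D, f z ≠ 0) ∨ ∃ z ∈ γ • D, g z ≠ 0 := by
      by_contra hc
      push_neg at hc
      exact hne (by simp [Pi.add_apply, hc.1 z hz, hc.2 z hz])
    simpa [Set.mem_union, Set.mem_setOf_eq] using this
  smul_mem' := by
    intro r f hf
    refine Set.Finite.subset hf (Set.image_mono ?_)
    rintro γ ⟨z, hz, hne⟩
    refine ⟨z, hz, fun h0 => hne (by simp [h0])⟩

section Aux

variable {Γ Z R : Type} [Group Γ] [MulAction Γ Z] [CommRing R] {H : Subgroup Γ} {D : Set Z}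

/-- Key lemma: the value `Φ γ (γ⁻¹ • z)` is independent of the representative `γ`. -/
lemma key_indep
    (huniq : ∀ (z : Z) (γ γ' : Γ), γ⁻¹ • z ∈ D → γ'⁻¹ • z ∈ D → γ⁻¹ * γ' ∈ H)
    (Φ : Γ → D → R)
    (h1 : ∀ (γ : Γ), ∀ h ∈ H, ∀ (d : D) (hd : h • (d : Z) ∈ D),
      Φ (γ * h) d = Φ γ ⟨h • (d : Z), hd⟩)
    (z : Z) (γ γ' : Γ) (hγ : γ⁻¹ • z ∈ D) (hγ' : γ'⁻¹ • z ∈ D) :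
    Φ γ ⟨γ⁻¹ • z, hγ⟩ = Φ γ' ⟨γ'⁻¹ • z, hγ'⟩ := by
  have hh : γ'⁻¹ * γ ∈ H := huniq z γ' γ hγ' hγ
  have hsm : (γ'⁻¹ * γ) • ((γ⁻¹ • z : Z)) = γ'⁻¹ • z := by
    rw [smul_smul]
    congr 1
    group
  have hd : (γ'⁻¹ * γ) • ((⟨γ⁻¹ • z, hγ⟩ : D) : Z) ∈ D := by
    show (γ'⁻¹ * γ) • (γ⁻¹ • z : Z) ∈ D
    rw [hsm]; exact hγ'
  have := h1 γ' (γ'⁻¹ * γ) hh ⟨γ⁻¹ • z, hγ⟩ hd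
  have hmul : γ' * (γ'⁻¹ * γ) = γ := by group
  rw [hmul] at this
  rw [this]
  congr 1
  exact Subtype.ext hsm

end Aux

/-- (Abstract form of Lemma 3.3.)  If `Γ` acts on `Z`, `D ⊆ Z` is
`H`-stable, and the translates `γ·D` tile `Z` with uniquely determined coset `γH`, then
evaluation `Φ ↦ (z ↦ Φ(γ_z)(γ_z⁻¹·z))` is a well-defined `Γ`-equivariant isomorphism of
`R`-modules `Ind_H^Γ Map(D,R) ≅ M`. -/
theorem induced_module_iso (Γ Z R : Type) [Group Γ] [MulAction Γ Z] (H : Subgroup Γ)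
    (D : Set Z) [CommRing R]
    (hD : ∀ h ∈ H, h • D = D)
    (hex : ∀ z : Z, ∃ γ : Γ, γ⁻¹ • z ∈ D)
    (huniq : ∀ (z : Z) (γ γ' : Γ), γ⁻¹ • z ∈ D → γ'⁻¹ • z ∈ D → γ⁻¹ * γ' ∈ H) :
    ∃ e : indModule Γ Z R H D ≃ₗ[R] transModule Γ Z R H D,
      (∀ (Φ : indModule Γ Z R H D) (γ : Γ) (z : Z) (hz : γ⁻¹ • z ∈ D),
        (e Φ : Z → R) z = (Φ : Γ → D → R) γ ⟨γ⁻¹ • z, hz⟩) ∧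
      (∀ (γ' : Γ) (Φ : indModule Γ Z R H D)
          (hmem : (fun γ => (Φ : Γ → D → R) (γ'⁻¹ * γ)) ∈ indModule Γ Z R H D) (z : Z),
        (e ⟨fun γ => (Φ : Γ → D → R) (γ'⁻¹ * γ), hmem⟩ : Z → R) z =
          (e Φ : Z → R) (γ'⁻¹ • z)) := by
    classical
  -- selection of a representative for each z
  choose sel hsel using hex
  -- forward map on raw functions
  set F : (Γ → D → R) → Z → R := fun Φ z => Φ (sel z) ⟨(sel z)⁻¹ • z, hsel z⟩ with hF
  set G : (Z → R) → Γ → D → R := fun f γ d => f (γ • (d : Z)) with hG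
  -- F of an element of indModule, evaluated using any valid representative
  have Feval : ∀ (Φ : Γ → D → R), IndCond Γ Z R H D Φ → ∀ (γ : Γ) (z : Z)
      (hz : γ⁻¹ • z ∈ D), F Φ z = Φ γ ⟨γ⁻¹ • z, hz⟩ := by
    intro Φ hΦ γ z hz
    exact key_indep huniq Φ hΦ.1 z (sel z) γ (hsel z) hz
  -- F lands in transModule
  have hFmem : ∀ Φ ∈ indModule Γ Z R H D, F Φ ∈ transModule Γ Z R H D := by
    intro Φ hΦ
    refine Set.Finite.subset hΦ.2 (Set.image_mono ?_)
    rintro γ ⟨z, hz, hne⟩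
    obtain ⟨d, hd, rfl⟩ := hz
    have hzD : γ⁻¹ • (γ • d) ∈ D := by rwa [inv_smul_smul]
    have := Feval Φ hΦ γ (γ • d) hzD
    intro h0
    rw [this, h0] at hne
    exact hne rfl
  -- G lands in indModule
  have hGmem : ∀ f ∈ transModule Γ Z R H D, G f ∈ indModule Γ Z R H D := by
    intro f hf
    constructor
    · intro γ h hh d hd
      show f ((γ * h) • (d : Z)) = f (γ • (h • (d : Z)))
      rw [mul_smul]
    · refine Set.Finite.subset hf (Set.image_mono ?_)
      intro γ hγ
      have : ∃ d : D, f (γ • (d : Z)) ≠ 0 := by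
        by_contra hc
        push_neg at hc
        exact hγ (funext fun d => hc d)
      obtain ⟨d, hd⟩ := this
      exact ⟨γ • (d : Z), ⟨d, d.2, rfl⟩, hd⟩
  -- linearity of F and G is obvious pointwise; build the equiv
  refine ⟨{ toFun := fun Φ => ⟨F Φ, hFmem Φ Φ.2⟩
            invFun := fun f => ⟨G f, hGmem f f.2⟩
            map_add' := by intro Φ Ψ; ext z; simp [hF]
            map_smul' := by intro r Φ; ext z; simp [hF]
            left_inv := by
              intro Φ
              ext γ d
              show G (F Φ) γ d = (Φ : Γ → D → R) γ d
              have hzD : γ⁻¹ • (γ • (d : Z)) ∈ D := by rw [inv_smul_smul]; exact d.2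
              show F (Φ : Γ → D → R) (γ • (d : Z)) = _
              rw [Feval Φ Φ.2 γ (γ • (d : Z)) hzD]
              have hsub : (⟨γ⁻¹ • (γ • (d : Z)), hzD⟩ : D) = d :=
                Subtype.ext (inv_smul_smul γ (d : Z))
              rw [hsub]
            right_inv := by
              intro f
              ext z
              show G (f : Z → R) (sel z) ⟨(sel z)⁻¹ • z, hsel z⟩ = (f : Z → R) z
              show (f : Z → R) ((sel z) • ((sel z)⁻¹ • z)) = _
              rw [smul_inv_smul] }, ?_, ?_⟩
  · intro Φ γ z hz
    exact Feval Φ Φ.2 γ z hz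
  · intro γ' Φ hmem z
    set s := sel (γ'⁻¹ • z) with hs
    have hzD : (γ' * s)⁻¹ • z ∈ D := by
      rw [mul_inv_rev, mul_smul]
      exact hsel (γ'⁻¹ • z)
    have lhs := Feval (fun γ => (Φ : Γ → D → R) (γ'⁻¹ * γ)) hmem (γ' * s) z hzD
    show F (fun γ => (Φ : Γ → D → R) (γ'⁻¹ * γ)) z = F (Φ : Γ → D → R) (γ'⁻¹ • z)
    rw [lhs]
    show (Φ : Γ → D → R) (γ'⁻¹ * (γ' * s)) _ = (Φ : Γ → D → R) s ⟨s⁻¹ • (γ'⁻¹ • z), hsel _⟩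
    have hsub : (⟨(γ' * s)⁻¹ • z, hzD⟩ : D) = ⟨s⁻¹ • (γ'⁻¹ • z), hsel _⟩ :=
      Subtype.ext (by show (γ' * s)⁻¹ • z = s⁻¹ • γ'⁻¹ • z; rw [mul_inv_rev, mul_smul])
    rw [show γ'⁻¹ * (γ' * s) = s by group, hsub]
end
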